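/- Let s ≥ 1 and let (R_1,I_1),…,(R_s,I_s) be rings with unit, where each I_i is a Jacobson ideal of R_i. Let φ_i : R_i → R_{i+1} (for 1 ≤ i ≤ s−1) be a sequence of adequate ring homomorphisms with φ_i(I_i) ⊆ I_{i+1}; set φ_{ii} = id_{R_i} and φ_{ij} = φ_{j−1} ∘ ⋯ ∘ φ_i for i < j. For each i, let N_i and M_i be R_i-modules, all finitely generated with the possible exception of N_s. For each pair i ≤ j, let α_{ij} : N_i → M_j be a homomorphism over φ_{ij}. Let N = ⊕_{i=1}^s N_i and M = ⊕_{i=1}^s M_i as abelian groups, and define α : N → M by α(ξ_1,…,ξ_s) = (α_{11}(ξ_1), α_{12}(ξ_1)+α_{22}(ξ_2), …, α_{1s}(ξ_1)+⋯+α_{ss}(ξ_s)). If α(N) + Σ_{i=1}^s I_i·M_i = M, then α(N) = M, and moreover α(Σ_{i=1}^s I_i·N_i) = Σ_{i=1}^s I_i·M_i. -/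

import Mathlib

open Submodule

/-- An ideal `I` of a ring `R` with unit is a *Jacobson ideal* if `1 + z` is invertible
for every `z ∈ I`. -/
def IsJacobsonIdeal {R : Type} [CommRing R] (I : Ideal R) : Prop :=
  ∀ z ∈ I, IsUnit (1 + z)

/-- A map `α : A → C` from an `R`-module to an `S`-module is a *homomorphism over* a ring
homomorphism `φ : R →+* S` if it is additive and `α (r • a) = φ r • α a`. -/
def IsHomOver {R S : Type} [CommRing R] [CommRing S] (φ : R →+* S)
    {A C : Type} [AddCommGroup A] [Module R A] [AddCommGroup C] [Module S C]
    (α : A → C) : Prop :=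
  (∀ a b : A, α (a + b) = α a + α b) ∧ ∀ (r : R) (a : A), α (r • a) = φ r • α a

/-- A ring homomorphism `φ : (R, I) → (S, J)` between rings with distinguished Jacobson
ideals, with `φ I ⊆ J`, is *adequate* if: for every finitely generated `R`-module `A`,
all `S`-modules `B` and `C` with `C` finitely generated, every `S`-linear `β : B → C`
and every homomorphism `α : A → C` over `φ`, the equality `α(A) + β(B) + J·C = C`
implies both `α(A) + β(B) = C` and `α(I·A) + β(J·B) = J·C`. -/
def Adequate {R S : Type} [CommRing R] [CommRing S] (φ : R →+* S)
    (I : Ideal R) (J : Ideal S) : Prop :=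
  ∀ (A : Type) (_ : AddCommGroup A), ∀ (_ : Module R A), Module.Finite R A →
  ∀ (B C : Type) (_ : AddCommGroup B), ∀ (_ : Module S B),
  ∀ (_ : AddCommGroup C), ∀ (_ : Module S C), Module.Finite S C →
  ∀ (β : B →ₗ[S] C) (α : A → C), IsHomOver φ α →
    (∀ c : C, ∃ (a : A) (b : B), c - α a - β b ∈ J • (⊤ : Submodule S C)) →
    (∀ c : C, ∃ (a : A) (b : B), c = α a + β b) ∧
    (∀ c : C, c ∈ J • (⊤ : Submodule S C) ↔
      ∃ a ∈ I • (⊤ : Submodule R A), ∃ b ∈ J • (⊤ : Submodule S B), c = α a + β b)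

/-- The total map `α : ⊕ᵢ Nᵢ → ⊕ᵢ Mᵢ`, `α (ξ₁, …, ξ_s) = (∑_{j ≤ i} α_{j i} (ξ_j))ᵢ`. -/
def totalHom {s : ℕ} {N M : Fin s → Type}
    [∀ i, AddCommGroup (N i)] [∀ i, AddCommGroup (M i)]
    (A : ∀ i j : Fin s, i ≤ j → N i → M j)
    (n : ∀ i, N i) : ∀ i, M i :=
  fun i => ∑ j : Fin s, if h : j ≤ i then A j i h (n j) else 0

set_option linter.unusedSectionVars false

section Helpers

variable {R S : Type} [CommRing R] [CommRing S] {φ : R →+* S}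
variable {A C : Type} [AddCommGroup A] [Module R A] [AddCommGroup C] [Module S C]

theorem IsHomOver.map_zero' {α : A → C} (h : IsHomOver φ α) : α 0 = 0 := by
  have h0 := h.1 0 0
  rw [add_zero] at h0
  exact left_eq_add.mp h0

theorem IsHomOver.map_neg' {α : A → C} (h : IsHomOver φ α) (a : A) : α (-a) = - α a := by
  have h2 := h.1 a (-a)
  rw [add_neg_cancel, h.map_zero'] at h2
  exact (neg_eq_of_add_eq_zero_right h2.symm).symm

theorem IsHomOver.map_sub' {α : A → C} (h : IsHomOver φ α) (a b : A) :
    α (a - b) = α a - α b := by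
  rw [sub_eq_add_neg, h.1, h.map_neg', sub_eq_add_neg]

/-- Homs over φ map `I•⊤` into `J•⊤` provided `φ I ⊆ J`. -/
theorem IsHomOver.mem_smul_top {α : A → C} (h : IsHomOver φ α) {I : Ideal R} {J : Ideal S}
    (hIJ : ∀ r ∈ I, φ r ∈ J) {a : A} (ha : a ∈ I • (⊤ : Submodule R A)) :
    α a ∈ J • (⊤ : Submodule S C) := by
  refine Submodule.smul_induction_on ha ?_ ?_
  · intro r hr n _
    rw [h.2]
    exact Submodule.smul_mem_smul (hIJ r hr) mem_top
  · intro x y hx hy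
    rw [h.1]; exact add_mem hx hy

theorem linmap_mem_smul_top {B : Type} [AddCommGroup B] [Module R B] (f : A →ₗ[R] B)
    {I : Ideal R} {a : A} (ha : a ∈ I • (⊤ : Submodule R A)) :
    f a ∈ I • (⊤ : Submodule R B) := by
  refine Submodule.smul_induction_on ha ?_ ?_
  · intro r hr n _
    rw [map_smul]; exact Submodule.smul_mem_smul hr mem_top
  · intro x y hx hy
    rw [map_add]; exact add_mem hx hy

theorem jacobson_le {I : Ideal R} (h : IsJacobsonIdeal I) : I ≤ Ideal.jacobson ⊥ := by
  intro z hz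
  rw [Ideal.mem_jacobson_bot]
  intro y
  have : IsUnit (1 + z * y) := h _ (Ideal.mul_mem_right y I hz)
  simpa [add_comm] using this

/-- Nakayama: if every element of `M` is within `I•⊤` of the submodule `p`,
`M` finitely generated and `I` Jacobson, then `p = ⊤`. -/
theorem nakayama_density {M : Type} [AddCommGroup M] [Module R M] [Module.Finite R M]
    {I : Ideal R} (hI : IsJacobsonIdeal I) (p : Submodule R M)
    (dens : ∀ m : M, ∃ u ∈ p, m - u ∈ I • (⊤ : Submodule R M)) : p = ⊤ := by
  have hQ : (⊤ : Submodule R (M ⧸ p)) = ⊥ := by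
    refine Submodule.eq_bot_of_le_smul_of_le_jacobson_bot I ⊤ Module.Finite.fg_top ?_ (jacobson_le hI)
    intro q _
    obtain ⟨m, rfl⟩ := Submodule.Quotient.mk_surjective p q
    obtain ⟨u, hu, hd⟩ := dens m
    have : (Submodule.Quotient.mk m : M ⧸ p) = Submodule.Quotient.mk (m - u) := by
      rw [Submodule.Quotient.eq]; simpa using hu
    rw [this]
    have := linmap_mem_smul_top p.mkQ hd
    simpa using this
  rw [eq_top_iff]
  intro m _
  have : (Submodule.Quotient.mk m : M ⧸ p) = 0 := by
    rw [← Submodule.mem_bot (R := R), ← hQ]; trivial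
  exact (Submodule.Quotient.mk_eq_zero p).mp this

/-- components of a product element in `I•⊤` are in `I•⊤`. -/
theorem smul_top_fst {B : Type} [AddCommGroup B] [Module R B] {I : Ideal R}
    {x : A × B} (hx : x ∈ I • (⊤ : Submodule R (A × B))) :
    x.1 ∈ I • (⊤ : Submodule R A) :=
  linmap_mem_smul_top (LinearMap.fst R A B) hx

theorem smul_top_snd {B : Type} [AddCommGroup B] [Module R B] {I : Ideal R}
    {x : A × B} (hx : x ∈ I • (⊤ : Submodule R (A × B))) :
    x.2 ∈ I • (⊤ : Submodule R B) :=
  linmap_mem_smul_top (LinearMap.snd R A B) hx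

end Helpers

section StepDefs

variable {t : ℕ} {R : Fin (t+1) → Type} [∀ i, CommRing (R i)]
variable {N M : Fin (t+1) → Type}
variable [∀ i, AddCommGroup (N i)] [∀ i, Module (R i) (N i)]
variable [∀ i, AddCommGroup (M i)] [∀ i, Module (R i) (M i)]
variable (Φ : ∀ i j : Fin (t+1), i ≤ j → (R i →+* R j))
variable (A : ∀ i j : Fin (t+1), i ≤ j → N i → M j)

/-- partial sum over sources `≥ 1`. -/
def stot (v : ∀ i, N i) (l : Fin t) : M l.succ :=
  ∑ k : Fin t, if h : k.succ ≤ l.succ then A k.succ l.succ h (v k.succ) else 0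

theorem totalHom_succ (n : ∀ i, N i) (l : Fin t) :
    totalHom A n l.succ = A 0 l.succ (Fin.zero_le _) (n 0) + stot A n l := by
  rw [totalHom, Fin.sum_univ_succ, dif_pos (Fin.zero_le _)]
  rfl

theorem totalHom_zero (n : ∀ i, N i) :
    totalHom A n 0 = A 0 0 (le_refl _) (n 0) := by
  rw [totalHom, Fin.sum_univ_succ]
  have h : ∀ k : Fin t, (if h : k.succ ≤ (0 : Fin (t+1)) then A k.succ 0 h (n k.succ) else 0) = 0 := by
    intro k
    rw [dif_neg]
    intro h
    exact (Fin.succ_ne_zero k) (Fin.le_zero_iff.mp h)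
  rw [Finset.sum_congr rfl (fun k _ => h k), Finset.sum_const_zero, add_zero, dif_pos (le_refl _)]

variable (hA : ∀ (i j : Fin (t+1)) (hij : i ≤ j), IsHomOver (Φ i j hij) (A i j hij))

section
include hA

theorem stot_add (v w : ∀ i, N i) (l : Fin t) :
    stot A (fun i => v i + w i) l = stot A v l + stot A w l := by
  rw [stot, stot, stot, ← Finset.sum_add_distrib]
  refine Finset.sum_congr rfl fun k _ => ?_
  by_cases h : k.succ ≤ l.succ
  · rw [dif_pos h, dif_pos h, dif_pos h, (hA _ _ h).1]
  · rw [dif_neg h, dif_neg h, dif_neg h, add_zero]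

theorem stot_sub (v w : ∀ i, N i) (l : Fin t) :
    stot A (fun i => v i - w i) l = stot A v l - stot A w l := by
  rw [stot, stot, stot, ← Finset.sum_sub_distrib]
  refine Finset.sum_congr rfl fun k _ => ?_
  by_cases h : k.succ ≤ l.succ
  · rw [dif_pos h, dif_pos h, dif_pos h, (hA _ _ h).map_sub']
  · rw [dif_neg h, dif_neg h, dif_neg h, sub_zero]

theorem stot_zero (l : Fin t) : stot A (fun _ => 0) l = 0 := by
  rw [stot]
  refine Finset.sum_eq_zero fun k _ => ?_
  by_cases h : k.succ ≤ l.succ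
  · rw [dif_pos h, (hA _ _ h).map_zero']
  · rw [dif_neg h]

end

theorem stot_congr {v w : ∀ i, N i} (h : ∀ k : Fin t, v k.succ = w k.succ) (l : Fin t) :
    stot A v l = stot A w l := by
  rw [stot, stot]
  refine Finset.sum_congr rfl fun k _ => ?_
  by_cases hk : k.succ ≤ l.succ
  · rw [dif_pos hk, dif_pos hk, h k]
  · rw [dif_neg hk, dif_neg hk]

/-- twisted scaling of a source family from level `c`. -/
def vtw (c : Fin (t+1)) (r : R c) (v : ∀ i, N i) : ∀ i, N i :=
  fun i => if h : c ≤ i then Φ c i h r • v i else 0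

variable (Φcomp : ∀ (i j k : Fin (t+1)) (hij : i ≤ j) (hjk : j ≤ k) (hik : i ≤ k),
    Φ i k hik = (Φ j k hjk).comp (Φ i j hij))

section
include hA Φcomp

theorem stot_vtw (c : Fin (t+1)) (r : R c) (v : ∀ i, N i)
    (hsucc : ∀ k : Fin t, c ≤ k.succ) (l : Fin t) :
    stot A (vtw Φ c r v) l = Φ c l.succ (hsucc l) r • stot A v l := by
  rw [stot, stot, Finset.smul_sum]
  refine Finset.sum_congr rfl fun k _ => ?_
  by_cases h : k.succ ≤ l.succ
  · rw [dif_pos h, dif_pos h, vtw, dif_pos (hsucc k), (hA _ _ h).2,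
      Φcomp c k.succ l.succ (hsucc k) h (hsucc l)]
    rfl
  · rw [dif_neg h, dif_neg h, smul_zero]

end

variable {I : ∀ i, Ideal (R i)}
variable (ΦI : ∀ (i j : Fin (t+1)) (h : i ≤ j), ∀ r ∈ I i, Φ i j h r ∈ I j)

include ΦI in
theorem vtw_mem {c : Fin (t+1)} {r : R c} (hr : r ∈ I c) (v : ∀ i, N i) (i : Fin (t+1)) :
    vtw Φ c r v i ∈ I i • (⊤ : Submodule (R i) (N i)) := by
  rw [vtw]
  by_cases h : c ≤ i
  · rw [dif_pos h]
    exact Submodule.smul_mem_smul (ΦI c i h r hr) mem_top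
  · rw [dif_neg h]
    exact zero_mem _

end StepDefs

section UStep

variable {t : ℕ} {R : Fin (t+1) → Type} [∀ i, CommRing (R i)]
variable {N M : Fin (t+1) → Type}
variable [∀ i, AddCommGroup (N i)] [∀ i, Module (R i) (N i)]
variable [∀ i, AddCommGroup (M i)] [∀ i, Module (R i) (M i)]
variable {I : ∀ i, Ideal (R i)}
variable {Φ : ∀ i j : Fin (t+1), i ≤ j → (R i →+* R j)}
variable {A : ∀ i j : Fin (t+1), i ≤ j → N i → M j}

theorem u_step
    (jac0 : IsJacobsonIdeal (I 0))
    (Φrefl : ∀ (i : Fin (t+1)) (h : i ≤ i), Φ i i h = RingHom.id (R i))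
    (Φcomp : ∀ (i j k : Fin (t+1)) (hij : i ≤ j) (hjk : j ≤ k) (hik : i ≤ k),
      Φ i k hik = (Φ j k hjk).comp (Φ i j hij))
    (ΦI : ∀ (i j : Fin (t+1)) (h : i ≤ j), ∀ r ∈ I i, Φ i j h r ∈ I j)
    (Mfin0 : Module.Finite (R 0) (M 0))
    (hA : ∀ (i j : Fin (t+1)) (hij : i ≤ j), IsHomOver (Φ i j hij) (A i j hij))
    (hyp : ∀ m : ∀ i, M i, ∃ n : ∀ i, N i,
      ∀ i, m i - totalHom A n i ∈ (I i) • (⊤ : Submodule (R i) (M i)))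
    (SXII : ∀ m : ∀ i, M i, ∃ n : ∀ i, N i,
      ∀ l : Fin t, totalHom A n l.succ = m l.succ)
    (SXIII : ∀ m : ∀ i, M i, (∀ l : Fin t, m l.succ ∈ I l.succ • (⊤ : Submodule (R l.succ) (M l.succ))) →
      ∃ n : ∀ i, N i, (∀ i, n i ∈ I i • (⊤ : Submodule (R i) (N i))) ∧
        ∀ l : Fin t, totalHom A n l.succ = m l.succ) :
    (∀ m : ∀ i, M i, ∃ n : ∀ i, N i, ∀ i, totalHom A n i = m i) ∧
    (∀ m : ∀ i, M i, (∀ i, m i ∈ (I i) • (⊤ : Submodule (R i) (M i))) →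
      ∃ n : ∀ i, N i, (∀ i, n i ∈ (I i) • (⊤ : Submodule (R i) (N i))) ∧
        ∀ i, totalHom A n i = m i) := by
  classical
  -- the linearization of `A 0 0`
  have hA00 := hA 0 0 (le_refl _)
  rw [Φrefl 0 (le_refl _)] at hA00
  let α₀ : N 0 →ₗ[R 0] M 0 :=
    { toFun := A 0 0 (le_refl _)
      map_add' := hA00.1
      map_smul' := fun r x => hA00.2 r x }
  have hα₀ : ∀ x, α₀ x = A 0 0 (le_refl _) x := fun _ => rfl
  -- the submodule of sources at level 0 whose higher effects can be cancelled
  let U : Submodule (R 0) (N 0) :=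
    { carrier := {u : N 0 | ∃ v : ∀ i, N i, ∀ l : Fin t,
        A 0 l.succ (Fin.zero_le _) u + stot A v l = 0}
      add_mem' := by
        rintro a b ⟨v₁, h₁⟩ ⟨v₂, h₂⟩
        refine ⟨fun i => v₁ i + v₂ i, fun l => ?_⟩
        rw [(hA _ _ _).1, stot_add Φ A hA, add_add_add_comm, h₁ l, h₂ l, add_zero]
      zero_mem' := by
        refine ⟨fun _ => 0, fun l => ?_⟩
        rw [(hA _ _ _).map_zero', stot_zero Φ A hA, add_zero]
      smul_mem' := by
        rintro r u ⟨v, hv⟩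
        refine ⟨vtw Φ 0 r v, fun l => ?_⟩
        rw [(hA _ _ _).2, stot_vtw Φ A hA Φcomp 0 r v (fun k => Fin.zero_le _) l,
          ← smul_add, hv l, smul_zero] }
  have hUmem : ∀ u : N 0, u ∈ U ↔ ∃ v : ∀ i, N i, ∀ l : Fin t,
      A 0 l.succ (Fin.zero_le _) u + stot A v l = 0 := fun u => Iff.rfl
  -- density of `α₀ U` in `M 0`
  have dens : ∀ m0 : M 0, ∃ uu ∈ U.map α₀, m0 - uu ∈ I 0 • (⊤ : Submodule (R 0) (M 0)) := by
    intro m0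
    obtain ⟨n, hn⟩ := hyp (Fin.cases m0 (fun _ => 0))
    have h0 : m0 - totalHom A n 0 ∈ I 0 • (⊤ : Submodule (R 0) (M 0)) := hn 0
    have hsucc : ∀ l : Fin t, totalHom A n l.succ ∈ I l.succ • (⊤ : Submodule (R l.succ) (M l.succ)) := by
      intro l
      have h1 := hn l.succ
      have h2 : (Fin.cases m0 (fun _ => 0) l.succ : M l.succ) = 0 := rfl
      rw [h2, zero_sub] at h1
      simpa using neg_mem h1
    obtain ⟨nn, hnnI, hnn⟩ := SXIII (fun i => totalHom A n i) hsucc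
    refine ⟨α₀ (n 0 - nn 0), Submodule.mem_map_of_mem ?_, ?_⟩
    · refine ⟨fun i => n i - nn i, fun l => ?_⟩
      have e1 := totalHom_succ A n l
      have e2 := totalHom_succ A nn l
      have e3 : totalHom A nn l.succ = totalHom A n l.succ := hnn l
      rw [(hA _ _ _).map_sub', stot_sub Φ A hA]
      rw [e1, e2] at e3
      have e4 : A 0 l.succ (Fin.zero_le _) (n 0) - A 0 l.succ (Fin.zero_le _) (nn 0)
            + (stot A n l - stot A nn l)
          = (A 0 l.succ (Fin.zero_le _) (n 0) + stot A n l)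
            - (A 0 l.succ (Fin.zero_le _) (nn 0) + stot A nn l) := by abel
      rw [e4, ← e3, sub_self]
    · have hmem : α₀ (nn 0) ∈ I 0 • (⊤ : Submodule (R 0) (M 0)) :=
        linmap_mem_smul_top α₀ (hnnI 0)
      have e : m0 - α₀ (n 0 - nn 0) = (m0 - totalHom A n 0) + α₀ (nn 0) := by
        rw [totalHom_zero A n, map_sub]
        show m0 - (A 0 0 (le_refl _) (n 0) - A 0 0 (le_refl _) (nn 0))
            = m0 - A 0 0 (le_refl _) (n 0) + A 0 0 (le_refl _) (nn 0)
        abel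
      rw [e]
      exact add_mem h0 hmem
  have hp : U.map α₀ = ⊤ := nakayama_density jac0 _ dens
  -- completions with ideal coefficients
  have ucomp : ∀ w ∈ I 0 • U, ∃ v : ∀ i, N i,
      (∀ i, v i ∈ I i • (⊤ : Submodule (R i) (N i))) ∧
      ∀ l : Fin t, A 0 l.succ (Fin.zero_le _) w + stot A v l = 0 := by
    intro w hw
    refine Submodule.smul_induction_on hw ?_ ?_
    · rintro r hr u hu
      obtain ⟨v, hv⟩ := hu
      refine ⟨vtw Φ 0 r v, fun i => vtw_mem Φ ΦI hr v i, fun l => ?_⟩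
      rw [(hA _ _ _).2, stot_vtw Φ A hA Φcomp 0 r v (fun k => Fin.zero_le _) l,
        ← smul_add, hv l, smul_zero]
    · rintro x y ⟨v₁, hv₁, h₁⟩ ⟨v₂, hv₂, h₂⟩
      refine ⟨fun i => v₁ i + v₂ i, fun i => add_mem (hv₁ i) (hv₂ i), fun l => ?_⟩
      rw [(hA _ _ _).1, stot_add Φ A hA, add_add_add_comm, h₁ l, h₂ l, add_zero]
  constructor
  · -- (II)
    intro m
    obtain ⟨n₁, hn₁⟩ := SXII m
    have hd : m 0 - A 0 0 (le_refl _) (n₁ 0) ∈ U.map α₀ := by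
      rw [hp]; exact mem_top
    obtain ⟨u, hu, he⟩ := Submodule.mem_map.mp hd
    obtain ⟨v, hv⟩ := hu
    refine ⟨Fin.cases (n₁ 0 + u) (fun l => n₁ l.succ + v l.succ), ?_⟩
    intro i
    refine Fin.cases ?_ ?_ i
    · rw [totalHom_zero]
      show A 0 0 (le_refl _) (n₁ 0 + u) = m 0
      have : A 0 0 (le_refl _) (n₁ 0 + u) = A 0 0 (le_refl _) (n₁ 0) + α₀ u := (hA _ _ _).1 _ _
      rw [this, he]
      abel
    · intro l
      rw [totalHom_succ]
      have hs : stot A (Fin.cases (n₁ 0 + u) (fun l => n₁ l.succ + v l.succ) : ∀ i, N i) l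
          = stot A n₁ l + stot A v l := by
        rw [← stot_add Φ A hA]
        exact stot_congr A (fun k => rfl) l
      have ha : A 0 l.succ (Fin.zero_le _)
            ((Fin.cases (n₁ 0 + u) (fun l => n₁ l.succ + v l.succ) : ∀ i, N i) 0)
          = A 0 l.succ (Fin.zero_le _) (n₁ 0) + A 0 l.succ (Fin.zero_le _) u := (hA _ _ _).1 _ _
      rw [hs, ha, ← hn₁ l, totalHom_succ]
      have e5 : A 0 l.succ (Fin.zero_le _) (n₁ 0) + A 0 l.succ (Fin.zero_le _) u
            + (stot A n₁ l + stot A v l)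
          = (A 0 l.succ (Fin.zero_le _) (n₁ 0) + stot A n₁ l)
            + (A 0 l.succ (Fin.zero_le _) u + stot A v l) := by abel
      rw [e5, hv l, add_zero]
  · -- (III)
    intro m hm
    obtain ⟨n₁, hn₁I, hn₁⟩ := SXIII m (fun l => hm l.succ)
    have hd : m 0 - A 0 0 (le_refl _) (n₁ 0) ∈ I 0 • (⊤ : Submodule (R 0) (M 0)) := by
      refine sub_mem (hm 0) ?_
      exact linmap_mem_smul_top α₀ (hn₁I 0)
    have hd2 : m 0 - A 0 0 (le_refl _) (n₁ 0) ∈ (I 0 • U).map α₀ := by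
      rw [Submodule.map_smul'', hp]
      exact hd
    obtain ⟨u, hu, he⟩ := Submodule.mem_map.mp hd2
    obtain ⟨v, hvI, hv⟩ := ucomp u hu
    refine ⟨Fin.cases (n₁ 0 + u) (fun l => n₁ l.succ + v l.succ), ?_, ?_⟩
    · intro i
      refine Fin.cases ?_ ?_ i
      · exact add_mem (hn₁I 0) (Submodule.smul_mono le_rfl le_top hu)
      · intro l
        exact add_mem (hn₁I l.succ) (hvI l.succ)
    · intro i
      refine Fin.cases ?_ ?_ i
      · rw [totalHom_zero]
        show A 0 0 (le_refl _) (n₁ 0 + u) = m 0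
        have : A 0 0 (le_refl _) (n₁ 0 + u) = A 0 0 (le_refl _) (n₁ 0) + α₀ u := (hA _ _ _).1 _ _
        rw [this, he]
        abel
      · intro l
        rw [totalHom_succ]
        have hs : stot A (Fin.cases (n₁ 0 + u) (fun l => n₁ l.succ + v l.succ) : ∀ i, N i) l
            = stot A n₁ l + stot A v l := by
          rw [← stot_add Φ A hA]
          exact stot_congr A (fun k => rfl) l
        have ha : A 0 l.succ (Fin.zero_le _)
              ((Fin.cases (n₁ 0 + u) (fun l => n₁ l.succ + v l.succ) : ∀ i, N i) 0)
            = A 0 l.succ (Fin.zero_le _) (n₁ 0) + A 0 l.succ (Fin.zero_le _) u := (hA _ _ _).1 _ _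
        rw [hs, ha, ← hn₁ l, totalHom_succ]
        have e5 : A 0 l.succ (Fin.zero_le _) (n₁ 0) + A 0 l.succ (Fin.zero_le _) u
              + (stot A n₁ l + stot A v l)
            = (A 0 l.succ (Fin.zero_le _) (n₁ 0) + stot A n₁ l)
              + (A 0 l.succ (Fin.zero_le _) u + stot A v l) := by abel
        rw [e5, hv l, add_zero]

end UStep

/-- the inductive statement: the conclusion of Mather's theorem for systems of size `s`. -/
def MStatement (s : ℕ) : Prop :=
  ∀ (R : Fin s → Type) (_ : ∀ i, CommRing (R i))
    (I : ∀ i, Ideal (R i)) (_ : ∀ i, IsJacobsonIdeal (I i))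
    (Φ : ∀ i j : Fin s, i ≤ j → (R i →+* R j))
    (_ : ∀ (i : Fin s) (h : i ≤ i), Φ i i h = RingHom.id (R i))
    (_ : ∀ (i j k : Fin s) (hij : i ≤ j) (hjk : j ≤ k) (hik : i ≤ k),
        Φ i k hik = (Φ j k hjk).comp (Φ i j hij))
    (_ : ∀ (i j : Fin s) (h : i ≤ j), ∀ r ∈ I i, Φ i j h r ∈ I j)
    (_ : ∀ (j : Fin s) (hj : (j:ℕ)+1 < s) (h : j ≤ ⟨(j:ℕ)+1, hj⟩),
        Adequate (Φ j ⟨(j:ℕ)+1, hj⟩ h) (I j) (I ⟨(j:ℕ)+1, hj⟩))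
    (N M : Fin s → Type)
    (_ : ∀ i, AddCommGroup (N i)) (_ : ∀ i, Module (R i) (N i))
    (_ : ∀ i, AddCommGroup (M i)) (_ : ∀ i, Module (R i) (M i))
    (_ : ∀ i, Module.Finite (R i) (M i))
    (_ : ∀ i : Fin s, (i:ℕ)+1 < s → Module.Finite (R i) (N i))
    (A : ∀ i j : Fin s, i ≤ j → N i → M j)
    (_ : ∀ (i j : Fin s) (hij : i ≤ j), IsHomOver (Φ i j hij) (A i j hij))
    (_ : ∀ m : ∀ i, M i, ∃ n : ∀ i, N i,
      ∀ i, m i - totalHom A n i ∈ (I i) • (⊤ : Submodule (R i) (M i))),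
    (∀ m : ∀ i, M i, ∃ n : ∀ i, N i, ∀ i, totalHom A n i = m i) ∧
    (∀ m : ∀ i, M i, (∀ i, m i ∈ (I i) • (⊤ : Submodule (R i) (M i))) →
      ∃ n : ∀ i, N i, (∀ i, n i ∈ (I i) • (⊤ : Submodule (R i) (N i))) ∧
        ∀ i, totalHom A n i = m i)

section SXStep

set_option maxHeartbeats 2000000 in
theorem sx_step {u : ℕ}
    {R : Fin (u+2) → Type} [cR : ∀ i, CommRing (R i)]
    {I : ∀ i, Ideal (R i)} (jac : ∀ i, IsJacobsonIdeal (I i))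
    {Φ : ∀ i j : Fin (u+2), i ≤ j → (R i →+* R j)}
    (Φrefl : ∀ (i : Fin (u+2)) (h : i ≤ i), Φ i i h = RingHom.id (R i))
    (Φcomp : ∀ (i j k : Fin (u+2)) (hij : i ≤ j) (hjk : j ≤ k) (hik : i ≤ k),
      Φ i k hik = (Φ j k hjk).comp (Φ i j hij))
    (ΦI : ∀ (i j : Fin (u+2)) (h : i ≤ j), ∀ r ∈ I i, Φ i j h r ∈ I j)
    (ade : ∀ (j : Fin (u+2)) (hj : (j:ℕ)+1 < u+2) (h : j ≤ ⟨(j:ℕ)+1, hj⟩),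
        Adequate (Φ j ⟨(j:ℕ)+1, hj⟩ h) (I j) (I ⟨(j:ℕ)+1, hj⟩))
    {N M : Fin (u+2) → Type}
    [aN : ∀ i, AddCommGroup (N i)] [mN : ∀ i, Module (R i) (N i)]
    [aM : ∀ i, AddCommGroup (M i)] [mM : ∀ i, Module (R i) (M i)]
    (Mfin : ∀ i, Module.Finite (R i) (M i))
    (Nfin : ∀ i : Fin (u+2), (i:ℕ)+1 < u+2 → Module.Finite (R i) (N i))
    {A : ∀ i j : Fin (u+2), i ≤ j → N i → M j}
    (hA : ∀ (i j : Fin (u+2)) (hij : i ≤ j), IsHomOver (Φ i j hij) (A i j hij))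
    (hyp : ∀ m : ∀ i, M i, ∃ n : ∀ i, N i,
      ∀ i, m i - totalHom A n i ∈ (I i) • (⊤ : Submodule (R i) (M i)))
    (IH : MStatement (u+1)) :
    (∀ m : ∀ i, M i, ∃ n : ∀ i, N i,
      ∀ l : Fin (u+1), totalHom A n l.succ = m l.succ) ∧
    (∀ m : ∀ i, M i,
      (∀ l : Fin (u+1), m l.succ ∈ I l.succ • (⊤ : Submodule (R l.succ) (M l.succ))) →
      ∃ n : ∀ i, N i, (∀ i, n i ∈ I i • (⊤ : Submodule (R i) (N i))) ∧
        ∀ l : Fin (u+1), totalHom A n l.succ = m l.succ) := by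
  classical
  -- index bookkeeping
  have h01 : (0 : Fin (u+2)) ≤ (0 : Fin (u+1)).succ := Fin.zero_le _
  set om : Fin (u+2) := (0 : Fin (u+1)).succ with hom
  have homle : ∀ k : Fin (u+1), om ≤ k.succ := by
    intro k
    rw [hom]
    exact Fin.succ_le_succ_iff.mpr (Fin.zero_le _)
  -- the base-changed module X
  letI alg : Algebra (R 0) (R om) := (Φ 0 om h01).toAlgebra
  have halg : ∀ r : R 0, algebraMap (R 0) (R om) r = Φ 0 om h01 r := fun r => rfl
  let X : Type := TensorProduct (R 0) (R om) (N 0)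
  haveI NfinX : Module.Finite (R 0) (N 0) := Nfin 0 (by simp)
  haveI XFin : Module.Finite (R om) X := inferInstance
  -- the map from N 0 to X
  let jmap : N 0 → X := fun n => (1 : R om) ⊗ₜ[R 0] n
  have hjsmul : ∀ (r : R 0) (n : N 0), jmap (r • n) = Φ 0 om h01 r • jmap n := by
    intro r n
    show (1 : R om) ⊗ₜ[R 0] (r • n) = Φ 0 om h01 r • ((1:R om) ⊗ₜ[R 0] n)
    rw [TensorProduct.tmul_smul, TensorProduct.smul_tmul', TensorProduct.smul_tmul',
      Algebra.smul_def, halg, smul_eq_mul]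
  have hjadd : ∀ a b : N 0, jmap (a + b) = jmap a + jmap b := fun a b =>
    TensorProduct.tmul_add _ a b
  -- the maps ε
  have hF : ∀ l : Fin (u+1), ∀ (r₀ : R 0) (r : R om) (n : N 0),
      Φ om l.succ (homle l) (r₀ • r) • A 0 l.succ (Fin.zero_le _) n
        = Φ om l.succ (homle l) r • A 0 l.succ (Fin.zero_le _) (r₀ • n) := by
    intro l r₀ r n
    rw [(hA 0 l.succ (Fin.zero_le _)).2, Algebra.smul_def, halg, map_mul, smul_smul,
      Φcomp 0 om l.succ h01 (homle l) (Fin.zero_le _)]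
    show (Φ om l.succ (homle l) (Φ 0 om h01 r₀) * Φ om l.succ (homle l) r)
          • A 0 l.succ (Fin.zero_le _) n
        = (Φ om l.succ (homle l) r * Φ om l.succ (homle l) (Φ 0 om h01 r₀))
          • A 0 l.succ (Fin.zero_le _) n
    rw [mul_comm]
  let F : ∀ l : Fin (u+1), R om →+ (N 0 →+ M l.succ) := fun l =>
    AddMonoidHom.mk' (fun r => AddMonoidHom.mk'
        (fun n => Φ om l.succ (homle l) r • A 0 l.succ (Fin.zero_le _) n)
        (fun a b => by rw [(hA 0 l.succ (Fin.zero_le _)).1, smul_add]))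
      (fun r r' => by
        ext n
        show Φ om l.succ (homle l) (r + r') • A 0 l.succ (Fin.zero_le _) n = _
        rw [map_add, add_smul]
        rfl)
  let eps : ∀ l : Fin (u+1), X →+ M l.succ := fun l =>
    TensorProduct.liftAddHom (F l) (fun r₀ r n => hF l r₀ r n)
  have epsd : ∀ (l : Fin (u+1)) (r : R om) (n : N 0),
      eps l (r ⊗ₜ[R 0] n) = Φ om l.succ (homle l) r • A 0 l.succ (Fin.zero_le _) n :=
    fun l r n => TensorProduct.liftAddHom_tmul (F l) _ r n
  have eps_j : ∀ (l : Fin (u+1)) (n : N 0), eps l (jmap n) = A 0 l.succ (Fin.zero_le _) n := by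
    intro l n
    rw [show jmap n = (1:R om) ⊗ₜ[R 0] n from rfl, epsd, map_one, one_smul]
  have eps_smul : ∀ (l : Fin (u+1)) (r : R om) (x : X),
      eps l (r • x) = Φ om l.succ (homle l) r • eps l x := by
    intro l r x
    induction x using TensorProduct.induction_on with
    | zero => rw [smul_zero, map_zero, smul_zero]
    | tmul a n => rw [TensorProduct.smul_tmul', smul_eq_mul, epsd, epsd, map_mul, mul_smul]
    | add x y hx hy => rw [smul_add, map_add, hx, hy, map_add, smul_add]

  -- the submodules W' ≤ W of X
  let W : Submodule (R om) X :=
    { carrier := {x | ∃ v : ∀ i, N i, ∀ l : Fin (u+1), eps l x = stot A v l}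
      add_mem' := by
        rintro x y ⟨v₁, h₁⟩ ⟨v₂, h₂⟩
        refine ⟨fun i => v₁ i + v₂ i, fun l => ?_⟩
        rw [map_add, h₁ l, h₂ l, stot_add Φ A hA]
      zero_mem' := ⟨fun _ => 0, fun l => by rw [map_zero, stot_zero Φ A hA]⟩
      smul_mem' := by
        rintro r x ⟨v, hv⟩
        refine ⟨vtw Φ om r v, fun l => ?_⟩
        rw [eps_smul, hv l, stot_vtw Φ A hA Φcomp om r v homle l] }
  let W' : Submodule (R om) X :=
    { carrier := {x | ∃ v : ∀ i, N i, (∀ i, v i ∈ I i • (⊤ : Submodule (R i) (N i))) ∧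
        ∀ l : Fin (u+1), eps l x = stot A v l}
      add_mem' := by
        rintro x y ⟨v₁, hI₁, h₁⟩ ⟨v₂, hI₂, h₂⟩
        refine ⟨fun i => v₁ i + v₂ i, fun i => add_mem (hI₁ i) (hI₂ i), fun l => ?_⟩
        rw [map_add, h₁ l, h₂ l, stot_add Φ A hA]
      zero_mem' := ⟨fun _ => 0, fun i => zero_mem _, fun l => by
        rw [map_zero, stot_zero Φ A hA]⟩
      smul_mem' := by
        rintro r x ⟨v, hvI, hv⟩
        refine ⟨vtw Φ om r v, fun i => ?_, fun l => ?_⟩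
        · rw [vtw]
          by_cases h : om ≤ i
          · rw [dif_pos h]; exact Submodule.smul_mem _ _ (hvI i)
          · rw [dif_neg h]; exact zero_mem _
        · rw [eps_smul, hv l, stot_vtw Φ A hA Φcomp om r v homle l] }
  haveI CqFin : Module.Finite (R om) (X ⧸ W') :=
    Module.Finite.of_surjective W'.mkQ (Submodule.Quotient.mk_surjective W')
  let β : ↥W →ₗ[R om] (X ⧸ W') := W'.mkQ.comp W.subtype
  let αq : N 0 → (X ⧸ W') := fun n => W'.mkQ (jmap n)
  have hαq : IsHomOver (Φ 0 om h01) αq :=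
    ⟨fun a b => by show W'.mkQ (jmap (a+b)) = _; rw [hjadd, map_add],
     fun r a => by show W'.mkQ (jmap (r • a)) = _; rw [hjsmul, map_smul]⟩
  -- the merged system of size u+1
  let R' : Fin (u+1) → Type := fun k => R k.succ
  letI cR' : ∀ k, CommRing (R' k) := fun k => cR k.succ
  let I' : ∀ k, Ideal (R' k) := fun k => I k.succ
  have jac' : ∀ k, IsJacobsonIdeal (I' k) := fun k => jac k.succ
  have hsle : ∀ {k l : Fin (u+1)}, k ≤ l → k.succ ≤ l.succ :=
    fun h => Fin.succ_le_succ_iff.mpr h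
  let Φ' : ∀ k l : Fin (u+1), k ≤ l → (R' k →+* R' l) := fun k l h => Φ k.succ l.succ (hsle h)
  have Φrefl' : ∀ (k : Fin (u+1)) (h : k ≤ k), Φ' k k h = RingHom.id (R' k) :=
    fun k _ => Φrefl k.succ (le_refl _)
  have Φcomp' : ∀ (i j k : Fin (u+1)) (hij : i ≤ j) (hjk : j ≤ k) (hik : i ≤ k),
      Φ' i k hik = (Φ' j k hjk).comp (Φ' i j hij) :=
    fun i j k hij hjk hik => Φcomp i.succ j.succ k.succ (hsle hij) (hsle hjk) (hsle hik)
  have ΦI' : ∀ (k l : Fin (u+1)) (h : k ≤ l), ∀ r ∈ I' k, Φ' k l h r ∈ I' l :=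
    fun k l h r hr => ΦI k.succ l.succ (hsle h) r hr
  have ade' : ∀ (k : Fin (u+1)) (hk : (k:ℕ)+1 < u+1) (h : k ≤ ⟨(k:ℕ)+1, hk⟩),
      Adequate (Φ' k ⟨(k:ℕ)+1, hk⟩ h) (I' k) (I' ⟨(k:ℕ)+1, hk⟩) := by
    intro k hk h
    exact ade k.succ (by simpa using Nat.succ_lt_succ hk) (hsle h)
  let N' : Fin (u+1) → Type := fun k => Fin.cases (N om × X) (fun j => N j.succ.succ) k
  letI aN' : ∀ k, AddCommGroup (N' k) := fun k =>
    Fin.cases (motive := fun k => AddCommGroup (N' k))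
      (show AddCommGroup (N om × X) from inferInstance) (fun j => aN j.succ.succ) k
  letI mN' : ∀ k, Module (R' k) (N' k) := fun k =>
    Fin.cases (motive := fun k => Module (R' k) (N' k))
      (show Module (R om) (N om × X) from inferInstance) (fun j => mN j.succ.succ) k
  let M' : Fin (u+1) → Type := fun k => M k.succ
  letI aM' : ∀ k, AddCommGroup (M' k) := fun k => aM k.succ
  letI mM' : ∀ k, Module (R' k) (M' k) := fun k => mM k.succ
  have Mfin' : ∀ k, Module.Finite (R' k) (M' k) := fun k => Mfin k.succ
  have Nfin' : ∀ k : Fin (u+1), (k:ℕ)+1 < u+1 → Module.Finite (R' k) (N' k) := by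
    intro k
    refine Fin.cases (motive := fun k => (k:ℕ)+1 < u+1 → Module.Finite (R' k) (N' k)) ?_ ?_ k
    · intro h0
      haveI : Module.Finite (R om) (N om) := Nfin om (by
        simp only [Fin.val_succ, Fin.val_zero] at h0
        rw [hom]
        simp only [Fin.val_succ, Fin.val_zero]
        omega)
      exact inferInstanceAs (Module.Finite (R om) (N om × X))
    · intro j hj
      exact Nfin j.succ.succ (by
        simp only [Fin.val_succ] at hj ⊢
        omega)
  let A' : ∀ k l : Fin (u+1), k ≤ l → N' k → M' l := fun k l =>
    Fin.cases (motive := fun k => k ≤ l → N' k → M' l)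
      (fun _ p => A om l.succ (homle l) p.1 + eps l p.2)
      (fun j h x => A j.succ.succ l.succ (hsle h) x) k
  have hA' : ∀ (k l : Fin (u+1)) (h : k ≤ l), IsHomOver (Φ' k l h) (A' k l h) := by
    intro k l
    refine Fin.cases (motive := fun k => ∀ h : k ≤ l, IsHomOver (Φ' k l h) (A' k l h)) ?_ ?_ k
    · intro h
      constructor
      · intro p q
        show A om l.succ (homle l) (p.1 + q.1) + eps l (p.2 + q.2) = _
        rw [(hA om l.succ (homle l)).1, map_add]
        show _ = A om l.succ (homle l) p.1 + eps l p.2 + (A om l.succ (homle l) q.1 + eps l q.2)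
        abel
      · intro r p
        show A om l.succ (homle l) (r • p.1) + eps l (r • p.2) = _
        rw [(hA om l.succ (homle l)).2, eps_smul]
        show _ = Φ om l.succ (hsle h) r • (A om l.succ (homle l) p.1 + eps l p.2)
        rw [smul_add]
    · intro j h
      exact hA j.succ.succ l.succ (hsle h)
  -- lifting merged sources back
  let mlift : (∀ k, N' k) → (∀ i : Fin (u+2), N i) := fun n' =>
    Fin.cases (0 : N 0) (fun j =>
      Fin.cases (motive := fun j : Fin (u+1) => N j.succ) ((n' 0).1) (fun j' => n' j'.succ) j)
  -- the translation lemma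
  have trans : ∀ (n' : ∀ k, N' k) (k : Fin (u+1)),
      totalHom A' n' k = eps k ((n' 0).2) + stot A (mlift n') k := by
    intro n' k
    have hterm : ∀ j : Fin (u+1), (if h : j ≤ k then A' j k h (n' j) else 0)
        = (if h : j.succ ≤ k.succ then A j.succ k.succ h (mlift n' j.succ) else 0)
          + (if j = 0 then eps k ((n' 0).2) else 0) := by
      intro j
      refine Fin.cases (motive := fun j => (if h : j ≤ k then A' j k h (n' j) else 0)
          = (if h : j.succ ≤ k.succ then A j.succ k.succ h (mlift n' j.succ) else 0)
            + (if j = 0 then eps k ((n' 0).2) else 0)) ?_ ?_ j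
      ·
        rw [dif_pos (Fin.zero_le k), dif_pos (hsle (Fin.zero_le k)), if_pos rfl]
        rfl
      · intro j'
        skip
        rw [if_neg (Fin.succ_ne_zero j'), add_zero]
        by_cases h : j'.succ ≤ k
        · rw [dif_pos h, dif_pos (hsle h)]
          rfl
        · rw [dif_neg h, dif_neg (fun hc => h (Fin.succ_le_succ_iff.mp hc))]
    rw [totalHom, stot, Finset.sum_congr rfl (fun j _ => hterm j), Finset.sum_add_distrib,
      Finset.sum_ite_eq' Finset.univ (0 : Fin (u+1))]
    simp only [Finset.mem_univ, if_true]
    abel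
  -- mlift values
  have hmlift : ∀ (n' : ∀ k, N' k) (j : Fin (u+1)),
      mlift n' j.succ = Fin.cases (motive := fun j : Fin (u+1) => N j.succ)
        ((n' 0).1) (fun j' => n' j'.succ) j := fun n' j => rfl
  -- hypothesis for the merged system
  have hyp' : ∀ m' : ∀ k, M' k, ∃ n' : ∀ k, N' k,
      ∀ k, m' k - totalHom A' n' k ∈ I' k • (⊤ : Submodule (R' k) (M' k)) := by
    intro m'
    obtain ⟨n, hn⟩ := hyp (Fin.cases 0 m')
    refine ⟨Fin.cases ((n om, jmap (n 0)) : N om × X) (fun j => n j.succ.succ), fun k => ?_⟩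
    have e2 : totalHom A' (Fin.cases ((n om, jmap (n 0)) : N om × X) (fun j => n j.succ.succ)) k
        = totalHom A n k.succ := by
      rw [trans, totalHom_succ A n k]
      have e3 : ((Fin.cases ((n om, jmap (n 0)) : N om × X) (fun j => n j.succ.succ)
            : ∀ k, N' k) 0).2 = jmap (n 0) := rfl
      rw [e3, eps_j]
      congr 1
      refine stot_congr A (fun j => ?_) k
      exact Fin.cases (motive := fun j : Fin (u+1) =>
        mlift (Fin.cases ((n om, jmap (n 0)) : N om × X) (fun j => n j.succ.succ)) j.succ
          = n j.succ) rfl (fun j' => rfl) j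
    rw [e2]
    exact hn k.succ
  -- apply the induction hypothesis to the merged system
  have IHm := IH R' cR' I' jac' Φ' Φrefl' Φcomp' ΦI' ade' N' M' aN' mN' aM' mM'
    Mfin' Nfin' A' hA' hyp'
  -- apply adequacy of Φ 0 1
  have adeq : Adequate (Φ 0 om h01) (I 0) (I om) := ade 0 (by simpa using Nat.succ_lt_succ (Nat.zero_lt_succ u)) h01
  have adhyp : ∀ c : (X ⧸ W'), ∃ (a : N 0) (b : ↥W),
      c - αq a - β b ∈ I om • (⊤ : Submodule (R om) (X ⧸ W')) := by
    intro c
    obtain ⟨x, hx⟩ := Submodule.Quotient.mk_surjective W' c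
    obtain ⟨n, hn⟩ := hyp (Fin.cases 0 (fun l => eps l x))
    have hid : ∀ k : Fin (u+1), eps k x - totalHom A n k.succ
        ∈ I k.succ • (⊤ : Submodule (R k.succ) (M k.succ)) := fun k => hn k.succ
    obtain ⟨nh, hnhI, hnh⟩ := IHm.2 (fun k => eps k x - totalHom A n k.succ) hid
    have hxh : (nh 0).2 ∈ I om • (⊤ : Submodule (R om) X) := smul_top_snd (hnhI 0)
    have hw : (x - jmap (n 0) - (nh 0).2) ∈ W := by
      refine ⟨fun i => n i + mlift nh i, fun l => ?_⟩
      have t1 := hnh l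
      rw [trans nh l] at t1
      have t2 : eps l ((nh 0).2) = (eps l x - totalHom A n l.succ) - stot A (mlift nh) l :=
        eq_sub_of_add_eq t1
      rw [stot_add Φ A hA, map_sub, map_sub, eps_j, t2, totalHom_succ A n l]
      abel
    refine ⟨n 0, ⟨x - jmap (n 0) - (nh 0).2, hw⟩, ?_⟩
    have hrw : c - αq (n 0) - β ⟨x - jmap (n 0) - (nh 0).2, hw⟩ = W'.mkQ ((nh 0).2) := by
      rw [← hx]
      show W'.mkQ x - W'.mkQ (jmap (n 0)) - W'.mkQ (x - jmap (n 0) - (nh 0).2) = W'.mkQ ((nh 0).2)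
      rw [← map_sub, ← map_sub]
      congr 1
      abel
    rw [hrw]
    exact linmap_mem_smul_top W'.mkQ hxh
  have key := adeq (N 0) (aN 0) (mN 0) NfinX (↥W) (X ⧸ W')
    inferInstance inferInstance inferInstance inferInstance CqFin
    β αq hαq adhyp
  obtain ⟨adeS, adeId⟩ := key
  constructor
  · -- SX (II)
    intro m
    obtain ⟨nh, hnh⟩ := IHm.1 (fun k => m k.succ)
    obtain ⟨a, b, hab⟩ := adeS (W'.mkQ ((nh 0).2))
    have hw' : (nh 0).2 - jmap a - (b : X) ∈ W' := by
      rw [← Submodule.Quotient.mk_eq_zero W']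
      show W'.mkQ ((nh 0).2 - jmap a - (b : X)) = 0
      rw [map_sub, map_sub]
      have hab2 : W'.mkQ ((nh 0).2) = W'.mkQ (jmap a) + W'.mkQ (b : X) := hab
      rw [hab2]
      abel
    obtain ⟨v', hv'I, hv'⟩ := hw'
    obtain ⟨vb, hvb⟩ := b.property
    refine ⟨Fin.cases a (fun j => mlift nh j.succ + vb j.succ + v' j.succ), fun l => ?_⟩
    have e0 := hnh l
    rw [trans nh l] at e0
    have ex : eps l ((nh 0).2)
        = A 0 l.succ (Fin.zero_le _) a + stot A vb l + stot A v' l := by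
      have e1 := hv' l
      rw [map_sub, map_sub, eps_j, hvb l] at e1
      have e2 : eps l ((nh 0).2) = stot A v' l + (A 0 l.succ (Fin.zero_le _) a + stot A vb l) := by
        rw [← e1]; abel
      rw [e2]; abel
    rw [totalHom_succ]
    have hcs : stot A (Fin.cases a (fun j => mlift nh j.succ + vb j.succ + v' j.succ)
          : ∀ i, N i) l
        = stot A (mlift nh) l + stot A vb l + stot A v' l := by
      have hcg : stot A (Fin.cases a (fun j => mlift nh j.succ + vb j.succ + v' j.succ)
            : ∀ i, N i) l
          = stot A (fun i => (fun i => mlift nh i + vb i) i + v' i) l :=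
        stot_congr A (fun k => rfl) l
      rw [hcg, stot_add Φ A hA, stot_add Φ A hA]
    rw [hcs]
    show A 0 l.succ (Fin.zero_le _) a
        + (stot A (mlift nh) l + stot A vb l + stot A v' l) = m l.succ
    rw [← e0, ex]
    abel
  · -- SX (III)
    intro m hm
    obtain ⟨nh, hnhI, hnh⟩ := IHm.2 (fun k => m k.succ) (fun k => hm k)
    have hx0 : (nh 0).2 ∈ I om • (⊤ : Submodule (R om) X) := smul_top_snd (hnhI 0)
    have hq : W'.mkQ ((nh 0).2) ∈ I om • (⊤ : Submodule (R om) (X ⧸ W')) :=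
      linmap_mem_smul_top W'.mkQ hx0
    obtain ⟨a, haI, b, hbI, hab⟩ := (adeId (W'.mkQ ((nh 0).2))).mp hq
    have hw' : (nh 0).2 - jmap a - (b : X) ∈ W' := by
      rw [← Submodule.Quotient.mk_eq_zero W']
      show W'.mkQ ((nh 0).2 - jmap a - (b : X)) = 0
      rw [map_sub, map_sub]
      have hab2 : W'.mkQ ((nh 0).2) = W'.mkQ (jmap a) + W'.mkQ (b : X) := hab
      rw [hab2]
      abel
    obtain ⟨v', hv'I, hv'⟩ := hw'
    have wdec : ∀ (y : ↥W), y ∈ I om • (⊤ : Submodule (R om) ↥W) →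
        ∃ v : ∀ i, N i, (∀ i, v i ∈ I i • (⊤ : Submodule (R i) (N i))) ∧
          ∀ l, eps l (y : X) = stot A v l := by
      intro y hy
      refine Submodule.smul_induction_on hy ?_ ?_
      · intro r hr z _
        obtain ⟨v, hv⟩ := z.property
        refine ⟨vtw Φ om r v, vtw_mem Φ ΦI hr v, fun l => ?_⟩
        show eps l (r • (z : X)) = _
        rw [eps_smul, hv l, stot_vtw Φ A hA Φcomp om r v homle l]
      · rintro y z ⟨v₁, h1I, h1⟩ ⟨v₂, h2I, h2⟩
        refine ⟨fun i => v₁ i + v₂ i, fun i => add_mem (h1I i) (h2I i), fun l => ?_⟩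
        show eps l ((y : X) + (z : X)) = _
        rw [map_add, h1 l, h2 l, stot_add Φ A hA]
    obtain ⟨vb, hvbI, hvb⟩ := wdec b hbI
    refine ⟨Fin.cases a (fun j => mlift nh j.succ + vb j.succ + v' j.succ), ?_, fun l => ?_⟩
    · intro i
      refine Fin.cases ?_ ?_ i
      · exact haI
      · intro j
        refine add_mem (add_mem ?_ (hvbI j.succ)) (hv'I j.succ)
        refine Fin.cases (motive := fun j : Fin (u+1) =>
          mlift nh j.succ ∈ I j.succ • (⊤ : Submodule (R j.succ) (N j.succ))) ?_ ?_ j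
        · exact smul_top_fst (hnhI 0)
        · intro j'
          exact hnhI j'.succ
    · have e0 := hnh l
      rw [trans nh l] at e0
      have ex : eps l ((nh 0).2)
          = A 0 l.succ (Fin.zero_le _) a + stot A vb l + stot A v' l := by
        have e1 := hv' l
        rw [map_sub, map_sub, eps_j, hvb l] at e1
        have e2 : eps l ((nh 0).2) = stot A v' l + (A 0 l.succ (Fin.zero_le _) a + stot A vb l) := by
          rw [← e1]; abel
        rw [e2]; abel
      rw [totalHom_succ]
      have hcs : stot A (Fin.cases a (fun j => mlift nh j.succ + vb j.succ + v' j.succ)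
            : ∀ i, N i) l
          = stot A (mlift nh) l + stot A vb l + stot A v' l := by
        have hcg : stot A (Fin.cases a (fun j => mlift nh j.succ + vb j.succ + v' j.succ)
              : ∀ i, N i) l
            = stot A (fun i => (fun i => mlift nh i + vb i) i + v' i) l :=
          stot_congr A (fun k => rfl) l
        rw [hcg, stot_add Φ A hA, stot_add Φ A hA]
      rw [hcs]
      show A 0 l.succ (Fin.zero_le _) a
          + (stot A (mlift nh) l + stot A vb l + stot A v' l) = m l.succ
      rw [← e0, ex]
      abel


end SXStep

theorem aux : ∀ s : ℕ, MStatement s := by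
  intro s
  induction s with
  | zero =>
    intro R cR I jac Φ Φrefl Φcomp ΦI ade N M aN mN aM mM Mfin Nfin A hA hyp
    refine ⟨fun m => ⟨fun i => 0, fun i => i.elim0⟩,
      fun m hm => ⟨fun i => 0, fun i => i.elim0, fun i => i.elim0⟩⟩
  | succ t IH =>
    cases t with
    | zero =>
      intro R cR I jac Φ Φrefl Φcomp ΦI ade N M aN mN aM mM Mfin Nfin A hA hyp
      exact u_step (jac 0) Φrefl Φcomp ΦI (Mfin 0) hA hyp
        (fun m => ⟨fun i => 0, fun l => l.elim0⟩)
        (fun m hm => ⟨fun i => 0, fun i => zero_mem _, fun l => l.elim0⟩)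
    | succ u =>
      intro R cR I jac Φ Φrefl Φcomp ΦI ade N M aN mN aM mM Mfin Nfin A hA hyp
      obtain ⟨SXII, SXIII⟩ := sx_step jac Φrefl Φcomp ΦI ade Mfin Nfin hA hyp IH
      exact u_step (jac 0) Φrefl Φcomp ΦI (Mfin 0) hA hyp SXII SXIII


/-- Mather's algebraic theorem: given a chain of adequate homomorphisms
`(R₁,I₁) → ⋯ → (R_s,I_s)` of rings with Jacobson ideals, finitely generated modules
`Nᵢ, Mᵢ` over `Rᵢ` (with the possible exception of `N_s`), and homomorphisms
`α_{ij} : Nᵢ → M_j` over the composites `φ_{ij}`, if the total map `α` satisfies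
`α(N) + Σᵢ Iᵢ·Mᵢ = M`, then `α(N) = M` and `α(Σᵢ Iᵢ·Nᵢ) = Σᵢ Iᵢ·Mᵢ`. -/
theorem mather_algebraic_theorem
    (s : ℕ) (hs : 1 ≤ s)
    (R : Fin s → Type) [∀ i, CommRing (R i)]
    (I : ∀ i, Ideal (R i))
    (hJac : ∀ i, IsJacobsonIdeal (I i))
    -- the composites `φ_{ij} : R i →+* R j`, `i ≤ j`
    (Φ : ∀ i j : Fin s, i ≤ j → (R i →+* R j))
    (hΦrefl : ∀ (i : Fin s) (h : i ≤ i), Φ i i h = RingHom.id (R i))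
    (hΦsucc : ∀ (i j : Fin s) (hij : i ≤ j) (hj : (j : ℕ) + 1 < s),
      Φ i ⟨(j : ℕ) + 1, hj⟩ (le_trans hij (Fin.le_def.mpr (Nat.le_succ _))) =
        (Φ j ⟨(j : ℕ) + 1, hj⟩ (Fin.le_def.mpr (Nat.le_succ _))).comp (Φ i j hij))
    -- each consecutive `φ_j` sends `I_j` into `I_{j+1}` and is adequate
    (hΦI : ∀ (j : Fin s) (hj : (j : ℕ) + 1 < s),
      ∀ r ∈ I j, Φ j ⟨(j : ℕ) + 1, hj⟩ (Fin.le_def.mpr (Nat.le_succ _)) r ∈ I ⟨(j : ℕ) + 1, hj⟩)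
    (hAde : ∀ (j : Fin s) (hj : (j : ℕ) + 1 < s),
      Adequate (Φ j ⟨(j : ℕ) + 1, hj⟩ (Fin.le_def.mpr (Nat.le_succ _))) (I j) (I ⟨(j : ℕ) + 1, hj⟩))
    -- the modules
    (N M : Fin s → Type)
    [∀ i, AddCommGroup (N i)] [∀ i, Module (R i) (N i)]
    [∀ i, AddCommGroup (M i)] [∀ i, Module (R i) (M i)]
    (hMfin : ∀ i, Module.Finite (R i) (M i))
    (hNfin : ∀ i : Fin s, (i : ℕ) + 1 < s → Module.Finite (R i) (N i))
    -- the homomorphisms `α_{ij}` over `φ_{ij}`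
    (A : ∀ i j : Fin s, i ≤ j → N i → M j)
    (hA : ∀ (i j : Fin s) (hij : i ≤ j), IsHomOver (Φ i j hij) (A i j hij))
    -- hypothesis (I): `α(N) + Σᵢ Iᵢ·Mᵢ = M`
    (hyp : ∀ m : ∀ i, M i, ∃ n : ∀ i, N i,
      ∀ i, m i - totalHom A n i ∈ (I i) • (⊤ : Submodule (R i) (M i))) :
    -- (II): `α` is onto
    (∀ m : ∀ i, M i, ∃ n : ∀ i, N i, totalHom A n = m) ∧
    -- (III): `α (Σᵢ Iᵢ·Nᵢ) = Σᵢ Iᵢ·Mᵢ`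
    (∀ m : ∀ i, M i, (∀ i, m i ∈ (I i) • (⊤ : Submodule (R i) (M i))) ↔
      ∃ n : ∀ i, N i, (∀ i, n i ∈ (I i) • (⊤ : Submodule (R i) (N i))) ∧
        totalHom A n = m) := by
  classical
  -- general composition law
  have Φcomp : ∀ (i j k : Fin s) (hij : i ≤ j) (hjk : j ≤ k) (hik : i ≤ k),
      Φ i k hik = (Φ j k hjk).comp (Φ i j hij) := by
    have H : ∀ (d : ℕ) (i j k : Fin s) (hij : i ≤ j) (hjk : j ≤ k) (hik : i ≤ k),
        (k:ℕ) = (j:ℕ) + d → Φ i k hik = (Φ j k hjk).comp (Φ i j hij) := by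
      intro d
      induction d with
      | zero =>
        intro i j k hij hjk hik hd
        have hkj : k = j := Fin.ext (by omega)
        subst hkj
        rw [hΦrefl k hjk, RingHom.id_comp]
      | succ d IHd =>
        intro i j k hij hjk hik hd
        have hks : (k:ℕ) < s := k.isLt
        have hk0 : (j:ℕ) + d < s := by omega
        have hik₀ : i ≤ (⟨(j:ℕ)+d, hk0⟩ : Fin s) := by
          rw [Fin.le_def] at hij ⊢
          simp only [Fin.le_def] at *
          omega
        have hjk₀ : j ≤ (⟨(j:ℕ)+d, hk0⟩ : Fin s) := by
          rw [Fin.le_def]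
          simp only []
          omega
        have hlt : ((⟨(j:ℕ)+d, hk0⟩ : Fin s) : ℕ) + 1 < s := by
          simp only []
          omega
        have hk : k = ⟨((⟨(j:ℕ)+d, hk0⟩ : Fin s) : ℕ) + 1, hlt⟩ := Fin.ext (by simp; omega)
        subst hk
        have e1 := hΦsucc i (⟨(j:ℕ)+d, hk0⟩ : Fin s) hik₀ hlt
        have e2 := hΦsucc j (⟨(j:ℕ)+d, hk0⟩ : Fin s) hjk₀ hlt
        have e3 := IHd i j (⟨(j:ℕ)+d, hk0⟩ : Fin s) hij hjk₀ hik₀ (by simp)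
        rw [e1, e2, e3, RingHom.comp_assoc]
    intro i j k hij hjk hik
    refine H ((k:ℕ) - (j:ℕ)) i j k hij hjk hik ?_
    rw [Fin.le_def] at hjk
    omega
  -- general ideal-mapping law
  have ΦIgen : ∀ (i j : Fin s) (h : i ≤ j), ∀ r ∈ I i, Φ i j h r ∈ I j := by
    have H : ∀ (d : ℕ) (i j : Fin s) (h : i ≤ j), (j:ℕ) = (i:ℕ) + d →
        ∀ r ∈ I i, Φ i j h r ∈ I j := by
      intro d
      induction d with
      | zero =>
        intro i j h hd r hr
        have hij : j = i := Fin.ext (by omega)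
        subst hij
        rw [hΦrefl j h]
        exact hr
      | succ d IHd =>
        intro i j h hd r hr
        have hj0 : (i:ℕ) + d < s := by omega
        have hii₀ : i ≤ (⟨(i:ℕ)+d, hj0⟩ : Fin s) := by
          rw [Fin.le_def]
          simp only []
          omega
        have hlt : ((⟨(i:ℕ)+d, hj0⟩ : Fin s) : ℕ) + 1 < s := by
          simp only []
          omega
        have h₀j : (⟨(i:ℕ)+d, hj0⟩ : Fin s) ≤ j := by
          rw [Fin.le_def]
          simp only []
          omega
        have hje : j = ⟨((⟨(i:ℕ)+d, hj0⟩ : Fin s) : ℕ) + 1, hlt⟩ := Fin.ext (by simp; omega)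
        subst hje
        rw [Φcomp i (⟨(i:ℕ)+d, hj0⟩ : Fin s) _ hii₀ h₀j h, RingHom.comp_apply]
        exact hΦI (⟨(i:ℕ)+d, hj0⟩ : Fin s) hlt _ (IHd i _ hii₀ (by simp) r hr)
    intro i j h
    refine H ((j:ℕ) - (i:ℕ)) i j h ?_
    rw [Fin.le_def] at h
    omega
  have adeGen : ∀ (j : Fin s) (hj : (j:ℕ)+1 < s) (h : j ≤ ⟨(j:ℕ)+1, hj⟩),
      Adequate (Φ j ⟨(j:ℕ)+1, hj⟩ h) (I j) (I ⟨(j:ℕ)+1, hj⟩) := fun j hj h => hAde j hj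
  have main := aux s R inferInstance I hJac Φ hΦrefl Φcomp ΦIgen adeGen N M
    inferInstance inferInstance inferInstance inferInstance hMfin hNfin A hA hyp
  constructor
  · intro m
    obtain ⟨n, hn⟩ := main.1 m
    exact ⟨n, funext hn⟩
  · intro m
    constructor
    · intro hm
      obtain ⟨n, hnI, hn⟩ := main.2 m hm
      exact ⟨n, hnI, funext hn⟩
    · rintro ⟨n, hnI, rfl⟩
      intro i
      rw [totalHom]
      refine Submodule.sum_mem _ fun j _ => ?_
      by_cases h : j ≤ i
      · rw [dif_pos h]
        exact (hA j i h).mem_smul_top (fun r hr => ΦIgen j i h r hr) (hnI j)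
      · rw [dif_neg h]
        exact zero_mem _
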